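/- Let n ≥ 3 and let x : Fin n → ℝ satisfy x_1 ≤ ⋯ ≤ x_n, and suppose there is exactly one pair (i,j) with 1 ≤ i ≤ j ≤ n and x_i + x_j > 0. Then that pair is (n,n) (i.e. x_n > 0), x_j < 0 for all j < n, and #{(i,j) : 1 ≤ i ≤ j ≤ n, x_i + x_j < 0} = s + n(n−1)/2, where s = #{j : 1 ≤ j ≤ n−1, x_j < −x_n}. -/
import Mathlib

lemma tri_card (m : ℕ) :
    ((Finset.Icc 1 m ×ˢ Finset.Icc 1 m).filter (fun p => p.1 ≤ p.2)).card = m*(m+1)/2 := by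
  have h : (Finset.Icc 1 m ×ˢ Finset.Icc 1 m).filter (fun p => p.1 ≤ p.2)
      = (Finset.Icc 1 m).biUnion (fun j => (Finset.Icc 1 j).image (fun i => (i, j))) := by
    ext ⟨i, j⟩
    simp only [Finset.mem_filter, Finset.mem_product, Finset.mem_biUnion, Finset.mem_image,
      Finset.mem_Icc, Prod.mk.injEq]
    constructor
    · rintro ⟨⟨⟨hi1, _⟩, hj⟩, hij⟩
      exact ⟨j, hj, i, ⟨hi1, hij⟩, rfl, rfl⟩
    · rintro ⟨b, hb, a, ⟨ha1, hab⟩, rfl, rfl⟩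
      exact ⟨⟨⟨ha1, le_trans hab hb.2⟩, hb⟩, hab⟩
  rw [h, Finset.card_biUnion]
  · have h2 : ∀ j ∈ Finset.Icc 1 m, ((Finset.Icc 1 j).image (fun i => (i, j))).card = j := by
      intro j _
      rw [Finset.card_image_of_injective _ (fun a b h => (Prod.mk.injEq _ _ _ _).mp h |>.1)]
      simp
    rw [Finset.sum_congr rfl h2]
    have key : ∑ j ∈ Finset.Icc 1 m, j = ∑ j ∈ Finset.range (m+1), j := by
      rw [Finset.range_eq_Ico, Finset.sum_eq_sum_Ico_succ_bot (by omega : 0 < m+1),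
        ← Finset.Ico_add_one_right_eq_Icc]
      simp
    have h3 : (∑ j ∈ Finset.Icc 1 m, j) * 2 = m * (m + 1) := by
      rw [key, Finset.sum_range_id_mul_two]
      simp [Nat.mul_comm]
    omega
  · intro a _ b _ hab
    simp only [Finset.disjoint_left, Finset.mem_image]
    rintro p ⟨i, _, rfl⟩ ⟨i', _, h⟩
    exact hab ((Prod.mk.injEq _ _ _ _).mp h).2.symm

/-- Type CI, G = Sp(n,ℝ), case R⁺ = 1: if there is exactly one pair (i,j),
i ≤ j, with x_i + x_j > 0, then that pair is (n,n) (so x_n > 0), x_j < 0 for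
j < n, and #{(i,j) : i ≤ j, x_i + x_j < 0} = s + n(n−1)/2 with
s = #{j ≤ n−1 : x_j < −x_n}. -/
theorem stmt6 (n : ℕ) (hn : 3 ≤ n) (x : ℕ → ℝ)
    (hmono : ∀ i j, 1 ≤ i → i ≤ j → j ≤ n → x i ≤ x j)
    (huniq : ((Finset.Icc 1 n ×ˢ Finset.Icc 1 n).filter
        (fun p => p.1 ≤ p.2 ∧ 0 < x p.1 + x p.2)).card = 1) :
    0 < x n ∧ (∀ j, 1 ≤ j → j < n → x j < 0) ∧
    ((Finset.Icc 1 n ×ˢ Finset.Icc 1 n).filter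
        (fun p => p.1 ≤ p.2 ∧ x p.1 + x p.2 < 0)).card
      = ((Finset.Icc 1 (n-1)).filter (fun j => x j < -x n)).card + n*(n-1)/2 := by
  obtain ⟨p0, hp0⟩ := Finset.card_eq_one.mp huniq
  have hp0mem : p0 ∈ (Finset.Icc 1 n ×ˢ Finset.Icc 1 n).filter
      (fun p => p.1 ≤ p.2 ∧ 0 < x p.1 + x p.2) := hp0 ▸ Finset.mem_singleton_self p0
  simp only [Finset.mem_filter, Finset.mem_product, Finset.mem_Icc] at hp0mem
  obtain ⟨⟨⟨h11, h1n⟩, ⟨h21, h2n⟩⟩, _, hpos⟩ := hp0mem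
  have hxn : 0 < x n := by
    have := hmono p0.1 n h11 h1n le_rfl
    have := hmono p0.2 n h21 h2n le_rfl
    linarith
  have hnnmem : ((n, n) : ℕ × ℕ) ∈ (Finset.Icc 1 n ×ˢ Finset.Icc 1 n).filter
      (fun p => p.1 ≤ p.2 ∧ 0 < x p.1 + x p.2) := by
    simp only [Finset.mem_filter, Finset.mem_product, Finset.mem_Icc]
    exact ⟨⟨⟨by omega, le_rfl⟩, by omega, le_rfl⟩, le_rfl, by linarith⟩
  have hp0eq : p0 = (n, n) := by
    rw [hp0, Finset.mem_singleton] at hnnmem; exact hnnmem.symm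
  have hneg : ∀ i j : ℕ, 1 ≤ i → i ≤ j → j ≤ n → (i, j) ≠ (n, n) → x i + x j ≤ 0 := by
    intro i j hi hij hj hne
    by_contra h
    push_neg at h
    have : (i, j) ∈ (Finset.Icc 1 n ×ˢ Finset.Icc 1 n).filter
        (fun p => p.1 ≤ p.2 ∧ 0 < x p.1 + x p.2) := by
      simp only [Finset.mem_filter, Finset.mem_product, Finset.mem_Icc]
      exact ⟨⟨⟨hi, le_trans hij hj⟩, le_trans hi hij, hj⟩, hij, h⟩
    rw [hp0, hp0eq, Finset.mem_singleton] at this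
    exact hne this
  have hjneg : ∀ j, 1 ≤ j → j < n → x j < 0 := by
    intro j hj hjn
    have := hneg j n hj (le_of_lt hjn) le_rfl (by simp; omega)
    linarith
  refine ⟨hxn, hjneg, ?_⟩
  have hxle : ∀ j, 1 ≤ j → j < n → x j ≤ -x n := by
    intro j hj hjn
    have := hneg j n hj (le_of_lt hjn) le_rfl (by simp; omega)
    linarith
  have hsplit : (Finset.Icc 1 n ×ˢ Finset.Icc 1 n).filter
        (fun p => p.1 ≤ p.2 ∧ x p.1 + x p.2 < 0)
      = ((Finset.Icc 1 (n-1)).filter (fun j => x j < -x n)).image (fun j => (j, n))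
        ∪ (Finset.Icc 1 (n-1) ×ˢ Finset.Icc 1 (n-1)).filter (fun p => p.1 ≤ p.2) := by
    ext ⟨i, j⟩
    simp only [Finset.mem_filter, Finset.mem_product, Finset.mem_Icc, Finset.mem_union,
      Finset.mem_image, Prod.mk.injEq]
    constructor
    · rintro ⟨⟨⟨hi1, hin⟩, hj1, hjn⟩, hij, hsum⟩
      by_cases hjeq : j = n
      · left
        rw [hjeq] at hsum
        have hilt : i < n := by
          rcases lt_or_eq_of_le (hjeq ▸ hij) with h | h
          · exact h
          · exfalso; rw [h] at hsum; linarith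
        exact ⟨i, ⟨⟨hi1, by omega⟩, by linarith⟩, rfl, hjeq.symm⟩
      · right
        exact ⟨⟨⟨hi1, by omega⟩, hj1, by omega⟩, hij⟩
    · rintro (⟨a, ⟨⟨ha1, han⟩, hax⟩, rfl, rfl⟩ | ⟨⟨⟨hi1, hin⟩, hj1, hjn⟩, hij⟩)
      · exact ⟨⟨⟨ha1, by omega⟩, by omega, le_rfl⟩, by omega, by linarith⟩
      · have hjx : x j ≤ -x n := hxle j hj1 (by omega)
        have hix : x i ≤ x j := hmono i j hi1 hij (by omega)
        exact ⟨⟨⟨hi1, by omega⟩, hj1, by omega⟩, hij, by linarith⟩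
  rw [hsplit, Finset.card_union_of_disjoint, Finset.card_image_of_injective _
      (fun a b h => ((Prod.mk.injEq _ _ _ _).mp h).1), tri_card]
  · congr 1
    have : n - 1 + 1 = n := by omega
    rw [this, Nat.mul_comm]
  · simp only [Finset.disjoint_left, Finset.mem_image]
    rintro p ⟨a, _, rfl⟩ hmem
    simp only [Finset.mem_filter, Finset.mem_product, Finset.mem_Icc] at hmem
    omega
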